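/- If a trigonometric polynomial w(e^{it}) = \sum_{j=-m}^m c_j e^{ijt} with complex coefficients satisfies w(e^{it}) \ge 0 for all real t, then there exists an analytic polynomial p(z) = \sum_{j=0}^m a_j z^j such that w(e^{it}) = |p(e^{it})|^2 for all real t. -/

import Mathlib

open scoped ComplexOrder
open Polynomial Complex


noncomputable section FR

private lemma fr_circle_infinite : {z : ℂ | ‖z‖ = 1}.Infinite := by
  have hinj : Set.InjOn (fun t : ℝ => Complex.exp (t * Complex.I)) (Set.Ioo 0 Real.pi) := by
    intro s hs t ht h
    simp only at h
    rw [Complex.exp_eq_exp_iff_exists_int] at h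
    obtain ⟨n, hn⟩ := h
    have : (s : ℂ) = t + n * (2 * Real.pi) := by
      have := hn
      field_simp [Complex.I_ne_zero] at this ⊢
      linear_combination this
    have hs' : s = t + n * (2 * Real.pi) := by exact_mod_cast this
    have hn0 : n = 0 := by
      rcases hs with ⟨hs1, hs2⟩; rcases ht with ⟨ht1, ht2⟩
      have hpi := Real.pi_pos
      by_contra h0
      rcases lt_or_gt_of_ne h0 with h | h
      · have : (n : ℝ) ≤ -1 := by exact_mod_cast Int.le_of_lt_add_one (by simpa using h)
        nlinarith
      · have : (1:ℝ) ≤ n := by exact_mod_cast h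
        nlinarith
    rw [hn0] at hs'; simpa using hs'
  have := (Set.Ioo_infinite (by positivity : (0:ℝ) < Real.pi)).image hinj
  apply this.mono
  rintro z ⟨t, _, rfl⟩
  simp [Complex.norm_exp]

private lemma fr_eval_reflect (N : ℕ) (f : ℂ[X]) (hf : f.natDegree ≤ N) {z : ℂ}
    (hz : z ≠ 0) : (reflect N f).eval z = z ^ N * f.eval z⁻¹ := by
  letI : Invertible (z⁻¹) := invertibleOfNonzero (inv_ne_zero hz)
  have h := Polynomial.eval₂_reflect_mul_pow (RingHom.id ℂ) z⁻¹ N f hf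
  have hinv : (⅟(z⁻¹) : ℂ) = z := by
    have : (z⁻¹) * z = 1 := inv_mul_cancel₀ hz
    calc (⅟(z⁻¹) : ℂ) = ⅟(z⁻¹) * (z⁻¹ * z) := by rw [this, mul_one]
    _ = (⅟(z⁻¹) * z⁻¹) * z := by ring
    _ = z := by rw [invOf_mul_self, one_mul]
  rw [hinv] at h
  simp only [eval₂_at_apply, Polynomial.eval₂_eq_eval_map, Polynomial.map_id] at h
  field_simp at h ⊢
  rw [← h, mul_assoc, ← mul_pow, one_div, inv_mul_cancel₀ hz, one_pow, mul_one]

end FR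

private lemma fr_conj_eq_inv {z : ℂ} (hz : ‖z‖ = 1) : (starRingEnd ℂ) z = z⁻¹ := by
  have h0 : z ≠ 0 := by intro h; rw [h] at hz; simp at hz
  have : z * (starRingEnd ℂ) z = 1 := by
    rw [Complex.mul_conj]
    norm_cast
    rw [Complex.normSq_eq_norm_sq, hz]; norm_num
  exact eq_inv_of_mul_eq_one_left (by linear_combination this)

private lemma fr_pos_cancel {s : ℝ} (hs : 0 < s) {B : ℂ} (h : 0 ≤ (s:ℂ) * B) : 0 ≤ B := by
  rw [Complex.nonneg_iff] at h ⊢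
  rw [Complex.re_ofReal_mul, Complex.im_ofReal_mul] at h
  constructor
  · nlinarith [h.1]
  · have h2 := h.2
    have hs' : s ≠ 0 := ne_of_gt hs
    have : s * B.im = 0 := h2.symm
    rcases mul_eq_zero.mp this with h | h
    · exact absurd h hs'
    · exact h.symm

private lemma fr_selfinv (m : ℕ) (Q : ℂ[X]) (hdeg : Q.natDegree ≤ 2*m)
    (hreal : ∀ z : ℂ, ‖z‖ = 1 →
      (starRingEnd ℂ) (Q.eval z / z^m) = Q.eval z / z^m) :
    Q = reflect (2*m) (Q.map (starRingEnd ℂ)) := by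
  apply Polynomial.eq_of_infinite_eval_eq
  apply Set.Infinite.mono _ (fr_circle_infinite)
  intro z hz
  simp only [Set.mem_setOf_eq] at hz ⊢
  have h0 : z ≠ 0 := by intro h; rw [h] at hz; simp at hz
  have hd : (Q.map (starRingEnd ℂ)).natDegree ≤ 2*m :=
    le_trans Polynomial.natDegree_map_le hdeg
  rw [fr_eval_reflect (2*m) _ hd h0, ← fr_conj_eq_inv hz]
  have hmap : (Q.map (starRingEnd ℂ)).eval ((starRingEnd ℂ) z) = (starRingEnd ℂ) (Q.eval z) := by
    rw [Polynomial.eval_map, Polynomial.eval₂_at_apply]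
  rw [hmap]
  have hr := hreal z hz
  have hzm : z ^ m ≠ 0 := pow_ne_zero _ h0
  rw [map_div₀, map_pow, fr_conj_eq_inv hz] at hr
  field_simp at hr
  have hzm' : (z^m)⁻¹ * z^m = 1 := inv_mul_cancel₀ hzm
  linear_combination (-z^m) * hr - (eval z Q) * hzm'

example : True := trivial
private lemma fr_exp_circle (t : ℝ) : ‖Complex.exp ((t:ℂ) * Complex.I)‖ = 1 := by
  rw [Complex.norm_exp]; simp

private lemma fr_g_eq (m : ℕ) (Q : ℂ[X]) (t : ℝ) :
    Q.eval (Complex.exp ((t:ℂ) * Complex.I)) * Complex.exp (-(m:ℂ) * ((t:ℂ) * Complex.I))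
      = Q.eval (Complex.exp ((t:ℂ) * Complex.I)) / Complex.exp ((t:ℂ) * Complex.I) ^ m := by
  rw [div_eq_mul_inv, ← Complex.exp_nat_mul, ← Complex.exp_neg]
  congr 2
  ring

private lemma fr_hasDeriv (m : ℕ) (Q : ℂ[X]) (t : ℝ) :
    HasDerivAt (fun s : ℝ => Q.eval (Complex.exp ((s:ℂ) * Complex.I)) *
        Complex.exp (-(m:ℂ) * ((s:ℂ) * Complex.I)))
      (Q.derivative.eval (Complex.exp ((t:ℂ) * Complex.I)) * (Complex.exp ((t:ℂ) * Complex.I) * Complex.I) *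
          Complex.exp (-(m:ℂ) * ((t:ℂ) * Complex.I)) +
        Q.eval (Complex.exp ((t:ℂ) * Complex.I)) *
          (Complex.exp (-(m:ℂ) * ((t:ℂ) * Complex.I)) * (-(m:ℂ) * Complex.I))) t := by
  have h1 : HasDerivAt (fun s : ℝ => (s:ℂ) * Complex.I) Complex.I t := by
    simpa using (Complex.ofRealCLM.hasDerivAt (x := t)).mul_const Complex.I
  have h2 := h1.cexp
  have h3 := Q.hasDerivAt (Complex.exp ((t:ℂ) * Complex.I))
  have h4 := HasDerivAt.scomp (x := t) h3 h2
  have h5 : HasDerivAt (fun s : ℝ => -(m:ℂ) * ((s:ℂ) * Complex.I)) (-(m:ℂ) * Complex.I) t := by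
    simpa using h1.const_mul (-(m:ℂ))
  have h6 := h5.cexp
  have := h4.mul h6
  simp only [Function.comp, smul_eq_mul] at this ⊢
  exact this.congr_deriv (by ring)

private lemma fr_deriv_zero (m : ℕ) (Q : ℂ[X])
    (hpos : ∀ z : ℂ, ‖z‖ = 1 → 0 ≤ Q.eval z / z ^ m)
    {α : ℂ} (hα : ‖α‖ = 1) (hroot : Q.eval α = 0) :
    Q.derivative.eval α = 0 := by
  have h0 : α ≠ 0 := by intro h; rw [h] at hα; simp at hα
  set θ : ℝ := Complex.arg α with hθ
  have hαe : Complex.exp ((θ:ℂ) * Complex.I) = α := by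
    have := Complex.norm_mul_exp_arg_mul_I α
    rwa [hα, Complex.ofReal_one, one_mul] at this
  set g : ℝ → ℂ := fun s : ℝ => Q.eval (Complex.exp ((s:ℂ) * Complex.I)) *
      Complex.exp (-(m:ℂ) * ((s:ℂ) * Complex.I)) with hgdef
  have hgpos : ∀ t : ℝ, 0 ≤ g t := by
    intro t
    rw [hgdef]
    simp only
    rw [fr_g_eq]
    exact hpos _ (fr_exp_circle t)
  have hgθ : g θ = 0 := by
    rw [hgdef]; simp only; rw [hαe, hroot, zero_mul]
  have hd := fr_hasDeriv m Q θ
  rw [hαe] at hd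
  rw [← hgdef] at hd
  set d : ℂ := Q.derivative.eval α * (α * Complex.I) * Complex.exp (-(m:ℂ) * ((θ:ℂ) * Complex.I)) +
      Q.eval α * (Complex.exp (-(m:ℂ) * ((θ:ℂ) * Complex.I)) * (-(m:ℂ) * Complex.I)) with hddef
  have hre : HasDerivAt (fun t => (g t).re) d.re θ := by
    exact Complex.reCLM.hasFDerivAt.comp_hasDerivAt θ hd
  have him : HasDerivAt (fun t => (g t).im) d.im θ := by
    exact Complex.imCLM.hasFDerivAt.comp_hasDerivAt θ hd
  have hmin : IsLocalMin (fun t => (g t).re) θ := by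
    apply Filter.Eventually.of_forall
    intro t
    have h1 := (Complex.nonneg_iff.mp (hgpos t)).1
    have h2 : (g θ).re = 0 := by rw [hgθ]; simp
    simp only [h2]
    exact h1
  have h0re : d.re = 0 := hmin.hasDerivAt_eq_zero hre
  have h0im : d.im = 0 := by
    have hconst : (fun t => (g t).im) = fun _ : ℝ => 0 := by
      funext t
      exact ((Complex.nonneg_iff.mp (hgpos t)).2).symm
    rw [hconst] at him
    exact him.unique (hasDerivAt_const θ 0)
  have hd0 : d = 0 := Complex.ext h0re h0im
  rw [hddef, hroot] at hd0
  have hexp : Complex.exp (-(m:ℂ) * ((θ:ℂ) * Complex.I)) ≠ 0 := Complex.exp_ne_zero _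
  have : Q.derivative.eval α * (α * Complex.I) * Complex.exp (-(m:ℂ) * ((θ:ℂ) * Complex.I)) = 0 := by
    linear_combination hd0
  rcases mul_eq_zero.mp this with h | h
  · rcases mul_eq_zero.mp h with h' | h'
    · exact h'
    · exact absurd h' (mul_ne_zero h0 Complex.I_ne_zero)
  · exact absurd h hexp
private lemma fr_exp_inj {t θ : ℝ} (hlt : |t - θ| < 1)
    (he : Complex.exp ((t:ℂ) * Complex.I) = Complex.exp ((θ:ℂ) * Complex.I)) : t = θ := by
  rw [Complex.exp_eq_exp_iff_exists_int] at he
  obtain ⟨n, hn⟩ := he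
  have h1 : (t : ℂ) = θ + n * (2 * Real.pi) := by
    have h2 : (t:ℂ) * Complex.I = ((θ:ℝ) + n * (2*Real.pi) : ℂ) * Complex.I := by
      rw [hn]; ring
    exact_mod_cast mul_right_cancel₀ Complex.I_ne_zero h2
  have h1' : t = θ + n * (2 * Real.pi) := by exact_mod_cast h1
  have hn0 : n = 0 := by
    by_contra h
    have : (1:ℝ) ≤ |(n:ℝ)| := by
      rw [← Int.cast_abs]; exact_mod_cast Int.one_le_abs (by simpa using h)
    have hpi := Real.pi_gt_three
    have : |t - θ| = |(n:ℝ)| * (2 * Real.pi) := by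
      have he : t - θ = (n:ℝ) * (2 * Real.pi) := by rw [h1']; ring
      rw [he, abs_mul, abs_of_pos (by positivity : (0:ℝ) < 2 * Real.pi)]
    nlinarith [abs_nonneg ((n:ℝ))]
  rw [hn0] at h1'; simpa using h1'

private lemma fr_pos_limit (m : ℕ) (R : ℂ[X]) {α : ℂ} (hα : ‖α‖ = 1)
    (h : ∀ z : ℂ, ‖z‖ = 1 → z ≠ α → 0 ≤ R.eval z / z ^ m) :
    ∀ z : ℂ, ‖z‖ = 1 → 0 ≤ R.eval z / z ^ m := by
  intro z hz
  by_cases hzα : z = α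
  · subst hzα
    set θ : ℝ := Complex.arg z with hθ
    have hze : Complex.exp ((θ:ℂ) * Complex.I) = z := by
      have := Complex.norm_mul_exp_arg_mul_I z
      rwa [hz, Complex.ofReal_one, one_mul] at this
    set f : ℝ → ℂ := fun t => R.eval (Complex.exp ((t:ℂ) * Complex.I)) *
        Complex.exp (-(m:ℂ) * ((t:ℂ) * Complex.I)) with hfdef
    have hc : Continuous f := by
      apply Continuous.mul
      · exact (Polynomial.continuous R).comp
          (Complex.continuous_exp.comp (Complex.continuous_ofReal.mul continuous_const))
      · exact Complex.continuous_exp.comp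
          ((continuous_const).mul (Complex.continuous_ofReal.mul continuous_const))
    have hev : ∀ᶠ t in nhdsWithin θ {θ}ᶜ, 0 ≤ f t := by
      have h1 : ∀ᶠ t in nhdsWithin θ {θ}ᶜ, |t - θ| < 1 :=
        eventually_nhdsWithin_of_eventually_nhds (eventually_abs_sub_lt θ one_pos)
      filter_upwards [h1, self_mem_nhdsWithin] with t ht ht'
      have hne : Complex.exp ((t:ℂ) * Complex.I) ≠ z := by
        intro hcon
        exact ht' (fr_exp_inj ht (hcon.trans hze.symm))
      rw [hfdef]
      simp only
      rw [fr_g_eq]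
      exact h _ (fr_exp_circle t) hne
    have htend : Filter.Tendsto f (nhdsWithin θ {θ}ᶜ) (nhds (f θ)) :=
      (hc.continuousAt).tendsto.mono_left nhdsWithin_le_nhds
    have hfθ : f θ = R.eval z / z ^ m := by
      rw [hfdef]; simp only; rw [fr_g_eq, hze]
    rw [← hfθ]
    rw [Complex.nonneg_iff]
    constructor
    · apply ge_of_tendsto ((Complex.continuous_re.tendsto _).comp htend)
      filter_upwards [hev] with t ht
      exact (Complex.nonneg_iff.mp ht).1
    · have h1 : Filter.Tendsto (fun t => (f t).im) (nhdsWithin θ {θ}ᶜ) (nhds (f θ).im) :=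
        (Complex.continuous_im.tendsto _).comp htend
      have h2 : Filter.Tendsto (fun t => (f t).im) (nhdsWithin θ {θ}ᶜ) (nhds 0) := by
        apply Filter.Tendsto.congr' _ tendsto_const_nhds
        filter_upwards [hev] with t ht
        exact (Complex.nonneg_iff.mp ht).2
      exact (tendsto_nhds_unique h1 h2).symm
  · exact h z hz hzα
private lemma fr_abs_sq {w : ℂ} : ((‖w‖ : ℝ) : ℂ)^2 = w * (starRingEnd ℂ) w := by
  rw [Complex.mul_conj]
  norm_cast
  rw [← Complex.sq_norm]

private lemma fr_key : ∀ (m : ℕ) (Q : ℂ[X]), Q.natDegree ≤ 2 * m →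
    (∀ z : ℂ, ‖z‖ = 1 → 0 ≤ Q.eval z / z ^ m) →
    ∃ P : ℂ[X], P.natDegree ≤ m ∧
      ∀ z : ℂ, ‖z‖ = 1 → Q.eval z / z ^ m = ((‖P.eval z‖ : ℝ) : ℂ) ^ 2 := by
  intro m
  induction m with
  | zero =>
    intro Q hdeg hpos
    have hQC : Q = C (Q.coeff 0) := Polynomial.eq_C_of_natDegree_le_zero hdeg
    set q := Q.coeff 0 with hq
    have h1 := hpos 1 (by simp)
    rw [hQC] at h1
    simp only [Polynomial.eval_C, pow_zero, div_one] at h1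
    rw [Complex.nonneg_iff] at h1
    refine ⟨C ((Real.sqrt q.re : ℝ) : ℂ), by simp, ?_⟩
    intro z hz
    rw [hQC]
    simp only [Polynomial.eval_C, pow_zero, div_one]
    rw [Complex.norm_real, Real.norm_eq_abs, _root_.abs_of_nonneg (Real.sqrt_nonneg _)]
    have hsq : ((Real.sqrt q.re : ℝ) : ℂ)^2 = ((q.re : ℝ) : ℂ) := by
      norm_cast
      exact Real.sq_sqrt h1.1
    rw [hsq]
    exact (Complex.ext (by simp) (by simp [← h1.2])).symm
  | succ m ih =>
    intro Q hdeg hpos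
    by_cases hQ0 : Q = 0
    · exact ⟨0, by simp, fun z hz => by simp [hQ0]⟩
    have hreal : ∀ z : ℂ, ‖z‖ = 1 →
        (starRingEnd ℂ) (Q.eval z / z^(m+1)) = Q.eval z / z^(m+1) := by
      intro z hz
      have h := hpos z hz
      rw [Complex.nonneg_iff] at h
      exact Complex.conj_eq_iff_im.mpr h.2.symm
    have hSI : Q = reflect (2*(m+1)) (Q.map (starRingEnd ℂ)) := fr_selfinv (m+1) Q hdeg hreal
    by_cases hc0 : Q.coeff 0 = 0
    · -- case 1: X divides Q
      have htop : Q.coeff (2*(m+1)) = 0 := by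
        conv_lhs => rw [hSI]
        rw [Polynomial.coeff_reflect, Polynomial.revAt_le (le_refl _)]
        simp [hc0]
      obtain ⟨Q₁, hQ₁⟩ := (Polynomial.X_dvd_iff).mpr hc0
      have hd1 : Q₁.natDegree ≤ 2*m := by
        rw [Polynomial.natDegree_le_iff_coeff_eq_zero]
        intro k hk
        have hco : Q₁.coeff k = Q.coeff (k+1) := by rw [hQ₁, Polynomial.coeff_X_mul]
        rw [hco]
        rcases Nat.lt_or_ge (2*(m+1)) (k+1) with h | h
        · exact Polynomial.coeff_eq_zero_of_natDegree_lt (lt_of_le_of_lt hdeg h)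
        · have : k + 1 = 2*(m+1) := by omega
          rw [this]; exact htop
      have heq : ∀ z : ℂ, z ≠ 0 → Q.eval z / z^(m+1) = Q₁.eval z / z^m := by
        intro z h0
        rw [hQ₁]
        simp only [Polynomial.eval_mul, Polynomial.eval_X]
        field_simp
        ring
      have hpos1 : ∀ z : ℂ, ‖z‖ = 1 → 0 ≤ Q₁.eval z / z^m := by
        intro z hz
        have h0 : z ≠ 0 := by intro h; rw [h] at hz; simp at hz
        have := hpos z hz
        rwa [heq z h0] at this
      obtain ⟨P, hPdeg, hP⟩ := ih Q₁ hd1 hpos1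
      refine ⟨P, le_trans hPdeg (by omega), ?_⟩
      intro z hz
      have h0 : z ≠ 0 := by intro h; rw [h] at hz; simp at hz
      rw [heq z h0]
      exact hP z hz
    · -- coeff 0 ≠ 0
      have htop : Q.coeff (2*(m+1)) ≠ 0 := by
        conv_lhs => rw [hSI]
        rw [Polynomial.coeff_reflect, Polynomial.revAt_le (le_refl _)]
        simpa using hc0
      have hdeg' : Q.natDegree = 2*(m+1) := le_antisymm hdeg (Polynomial.le_natDegree_of_ne_zero htop)
      have hdegpos : 0 < Q.degree := by
        rw [Polynomial.degree_eq_natDegree hQ0, hdeg']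
        exact_mod_cast (by omega : 0 < 2*(m+1))
      obtain ⟨α, hαroot⟩ := Complex.exists_root hdegpos
      have hαroot : Q.eval α = 0 := hαroot
      have hα0 : α ≠ 0 := by
        intro h
        rw [h] at hαroot
        rw [← Polynomial.coeff_zero_eq_eval_zero] at hαroot
        exact hc0 hαroot
      by_cases hαc : ‖α‖ = 1
      · -- on-circle root: double root
        have hder := fr_deriv_zero (m+1) Q hpos hαc hαroot
        have hmult : (X - C α)^2 ∣ Q := by
          have h2 : 1 < Q.rootMultiplicity α :=
            (Polynomial.one_lt_rootMultiplicity_iff_isRoot hQ0).mpr ⟨hαroot, hder⟩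
          exact dvd_trans (pow_dvd_pow _ h2) (Q.pow_rootMultiplicity_dvd α)
        obtain ⟨Q₁, hQ₁⟩ := hmult
        have hQ₁0 : Q₁ ≠ 0 := by intro h; rw [h, mul_zero] at hQ₁; exact hQ0 hQ₁
        have hd1 : Q₁.natDegree ≤ 2*m := by
          have hXα : ((X - C α)^2 : ℂ[X]) ≠ 0 := pow_ne_zero 2 (Polynomial.X_sub_C_ne_zero α)
          have := Polynomial.natDegree_mul hXα hQ₁0
          rw [← hQ₁, hdeg'] at this
          simp [Polynomial.natDegree_pow, Polynomial.natDegree_X_sub_C] at this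
          omega
        set Q₂ : ℂ[X] := C (-α) * Q₁ with hQ₂def
        have hd2 : Q₂.natDegree ≤ 2*m := le_trans (Polynomial.natDegree_C_mul_le _ _) hd1
        have key : ∀ z : ℂ, ‖z‖ = 1 → Q.eval z / z^(m+1) =
            ((‖z - α‖ : ℝ):ℂ)^2 * (Q₂.eval z / z^m) := by
          intro z hz
          have h0 : z ≠ 0 := by intro h; rw [h] at hz; simp at hz
          have hcirc : ((‖z - α‖ : ℝ):ℂ)^2 * (z * α) = -(z-α)^2 := by
            rw [fr_abs_sq, map_sub, fr_conj_eq_inv hz, fr_conj_eq_inv hαc]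
            field_simp
            ring
          rw [hQ₁, hQ₂def]
          simp only [Polynomial.eval_mul, Polynomial.eval_pow, Polynomial.eval_sub,
            Polynomial.eval_X, Polynomial.eval_C]
          field_simp
          linear_combination (z^m * Q₁.eval z) * hcirc
        have hpos2 : ∀ z : ℂ, ‖z‖ = 1 → 0 ≤ Q₂.eval z / z^m := by
          apply fr_pos_limit m Q₂ hαc
          intro z hz hne
          have habs : (0:ℝ) < (‖z - α‖)^2 :=
            pow_pos (norm_pos_iff.mpr (sub_ne_zero.mpr hne)) 2
          apply fr_pos_cancel habs
          have h := hpos z hz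
          rw [key z hz] at h
          convert h using 2
          push_cast
          ring
        obtain ⟨P₁, hP₁deg, hP₁⟩ := ih Q₂ hd2 hpos2
        refine ⟨(X - C α) * P₁, ?_, ?_⟩
        · refine le_trans (Polynomial.natDegree_mul_le) ?_
          rw [Polynomial.natDegree_X_sub_C]
          omega
        · intro z hz
          rw [key z hz, hP₁ z hz]
          simp only [Polynomial.eval_mul, Polynomial.eval_sub, Polynomial.eval_X,
            Polynomial.eval_C, map_mul, norm_mul]
          push_cast
          ring
      · -- off-circle root
        set β : ℂ := ((starRingEnd ℂ) α)⁻¹ with hβdef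
        have hcα : (starRingEnd ℂ) α ≠ 0 := by simpa using hα0
        have hβ0 : β ≠ 0 := inv_ne_zero hcα
        have hβroot : Q.eval β = 0 := by
          conv_lhs => rw [hSI]
          rw [fr_eval_reflect _ _ (le_trans Polynomial.natDegree_map_le hdeg) hβ0]
          have hβinv : β⁻¹ = (starRingEnd ℂ) α := by rw [hβdef, inv_inv]
          rw [hβinv, Polynomial.eval_map, Polynomial.eval₂_at_apply, hαroot]
          simp
        have hβα : β ≠ α := by
          intro h
          apply hαc
          have haa : ‖α‖ ≠ 0 := by simpa using hα0
          have habs : ‖β‖ * ‖α‖ = 1 := by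
            rw [hβdef, norm_inv, Complex.norm_conj]
            exact inv_mul_cancel₀ haa
          rw [h] at habs
          rcases mul_self_eq_one_iff.mp habs with h' | h'
          · exact h'
          · exfalso
            have hn := norm_nonneg α
            rw [h'] at hn
            linarith
        obtain ⟨Q', hQ'⟩ := (Polynomial.dvd_iff_isRoot).mpr hαroot
        have hβQ' : Q'.eval β = 0 := by
          have h := hβroot
          rw [hQ'] at h
          simp only [Polynomial.eval_mul, Polynomial.eval_sub, Polynomial.eval_X,
            Polynomial.eval_C] at h
          rcases mul_eq_zero.mp h with h' | h'
          · exact absurd (sub_eq_zero.mp h') hβα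
          · exact h'
        obtain ⟨Q₁, hQ₁'⟩ := (Polynomial.dvd_iff_isRoot).mpr hβQ'
        have hQ₁ : Q = (X - C α) * (X - C β) * Q₁ := by rw [hQ', hQ₁']; ring
        have hQ₁0 : Q₁ ≠ 0 := by
          intro h; rw [h, mul_zero] at hQ₁; exact hQ0 hQ₁
        have hd1 : Q₁.natDegree ≤ 2*m := by
          have hf : ((X - C α) * (X - C β) : ℂ[X]) ≠ 0 :=
            mul_ne_zero (Polynomial.X_sub_C_ne_zero α) (Polynomial.X_sub_C_ne_zero β)
          have := Polynomial.natDegree_mul hf hQ₁0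
          rw [← hQ₁, hdeg'] at this
          rw [Polynomial.natDegree_mul (Polynomial.X_sub_C_ne_zero α)
            (Polynomial.X_sub_C_ne_zero β)] at this
          simp [Polynomial.natDegree_X_sub_C] at this
          omega
        set Q₂ : ℂ[X] := C (-β) * Q₁ with hQ₂def
        have hd2 : Q₂.natDegree ≤ 2*m := le_trans (Polynomial.natDegree_C_mul_le _ _) hd1
        have key : ∀ z : ℂ, ‖z‖ = 1 → Q.eval z / z^(m+1) =
            ((‖z - α‖ : ℝ):ℂ)^2 * (Q₂.eval z / z^m) := by
          intro z hz
          have h0 : z ≠ 0 := by intro h; rw [h] at hz; simp at hz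
          have hcirc : ((‖z - α‖ : ℝ):ℂ)^2 * (z * β) = -((z-α)*(z-β)) := by
            rw [fr_abs_sq, map_sub, fr_conj_eq_inv hz, hβdef]
            field_simp
            ring
          rw [hQ₁, hQ₂def]
          simp only [Polynomial.eval_mul, Polynomial.eval_sub, Polynomial.eval_X,
            Polynomial.eval_C]
          field_simp
          linear_combination (Q₁.eval z * z^m) * hcirc
        have hpos2 : ∀ z : ℂ, ‖z‖ = 1 → 0 ≤ Q₂.eval z / z^m := by
          intro z hz
          have hzα : z ≠ α := by
            intro h; rw [← h] at hαc; exact hαc hz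
          have habs : (0:ℝ) < (‖z - α‖)^2 :=
            pow_pos (norm_pos_iff.mpr (sub_ne_zero.mpr hzα)) 2
          apply fr_pos_cancel habs
          have h := hpos z hz
          rw [key z hz] at h
          convert h using 2
          push_cast
          ring
        obtain ⟨P₁, hP₁deg, hP₁⟩ := ih Q₂ hd2 hpos2
        refine ⟨(X - C α) * P₁, ?_, ?_⟩
        · refine le_trans (Polynomial.natDegree_mul_le) ?_
          rw [Polynomial.natDegree_X_sub_C]
          omega
        · intro z hz
          rw [key z hz, hP₁ z hz]
          simp only [Polynomial.eval_mul, Polynomial.eval_sub, Polynomial.eval_X,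
            Polynomial.eval_C, map_mul, norm_mul]
          push_cast
          ring
/-- **Fejér–Riesz theorem.** If a trigonometric polynomial
`w(e^{it}) = ∑_{j=-m}^m c_j e^{ijt}` is nonnegative for all real `t`
(nonnegativity in the order on `ℂ`: real and nonnegative), then there is an
analytic polynomial `p(z) = ∑_{j=0}^m a_j z^j` with `w(e^{it}) = |p(e^{it})|²`. -/
theorem stmt_0 (m : ℕ) (c : ℤ → ℂ)
    (hpos : ∀ t : ℝ, 0 ≤ ∑ j ∈ Finset.Icc (-(m : ℤ)) (m : ℤ),
        c j * Complex.exp ((j : ℂ) * (t : ℂ) * Complex.I)) :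
    ∃ a : ℕ → ℂ, ∀ t : ℝ,
      ∑ j ∈ Finset.Icc (-(m : ℤ)) (m : ℤ), c j * Complex.exp ((j : ℂ) * (t : ℂ) * Complex.I)
        = (‖∑ j ∈ Finset.range (m + 1),
            a j * Complex.exp ((j : ℂ) * (t : ℂ) * Complex.I)‖ : ℂ) ^ 2 := by
  classical
  set Q : ℂ[X] := ∑ k ∈ Finset.range (2*m+1), C (c ((k:ℤ) - (m:ℤ))) * X^k with hQdef
  have hdeg : Q.natDegree ≤ 2*m := by
    rw [hQdef]
    apply Polynomial.natDegree_sum_le_of_forall_le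
    intro k hk
    apply le_trans (Polynomial.natDegree_C_mul_le _ _)
    rw [Polynomial.natDegree_X_pow]
    simpa [Nat.lt_succ_iff] using hk
  have hw : ∀ t : ℝ, Q.eval (Complex.exp ((t:ℂ) * Complex.I)) /
        (Complex.exp ((t:ℂ) * Complex.I))^m
      = ∑ j ∈ Finset.Icc (-(m : ℤ)) (m : ℤ),
          c j * Complex.exp ((j : ℂ) * (t : ℂ) * Complex.I) := by
    intro t
    set z := Complex.exp ((t:ℂ) * Complex.I) with hzdef
    have h0 : z ≠ 0 := Complex.exp_ne_zero _
    rw [hQdef]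
    rw [Polynomial.eval_finset_sum]
    simp only [Polynomial.eval_mul, Polynomial.eval_C, Polynomial.eval_pow, Polynomial.eval_X]
    rw [Finset.sum_div]
    refine Finset.sum_nbij' (fun k => (k:ℤ) - (m:ℤ)) (fun j => (j + (m:ℤ)).toNat) ?_ ?_ ?_ ?_ ?_
    · intro k hk
      simp only [Finset.mem_range] at hk
      simp only [Finset.mem_Icc]
      omega
    · intro j hj
      simp only [Finset.mem_Icc] at hj
      simp only [Finset.mem_range]
      omega
    · intro k hk
      simp only [Finset.mem_range] at hk
      show ((k:ℤ) - (m:ℤ) + (m:ℤ)).toNat = k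
      omega
    · intro j hj
      simp only [Finset.mem_Icc] at hj
      show (((j + (m:ℤ)).toNat : ℕ) : ℤ) - (m:ℤ) = j
      omega
    · intro k hk
      have hexp : Complex.exp ((((k:ℤ) - (m:ℤ) : ℤ):ℂ) * (t:ℂ) * Complex.I)
          = z ^ ((k:ℤ) - (m:ℤ)) := by
        rw [mul_assoc, Complex.exp_int_mul]
      rw [hexp, zpow_sub₀ h0, zpow_natCast, zpow_natCast]
      ring
  have hpos' : ∀ z : ℂ, ‖z‖ = 1 → 0 ≤ Q.eval z / z^m := by
    intro z hz
    have hze : Complex.exp ((Complex.arg z : ℂ) * Complex.I) = z := by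
      have := Complex.norm_mul_exp_arg_mul_I z
      rwa [hz, Complex.ofReal_one, one_mul] at this
    rw [← hze, hw (Complex.arg z)]
    exact hpos _
  obtain ⟨P, hPdeg, hP⟩ := fr_key m Q hdeg hpos'
  refine ⟨fun j => P.coeff j, ?_⟩
  intro t
  have h1 := hP (Complex.exp ((t:ℂ) * Complex.I)) (fr_exp_circle t)
  rw [hw t] at h1
  have h2 : ∑ j ∈ Finset.range (m+1), P.coeff j * Complex.exp ((j:ℂ) * (t:ℂ) * Complex.I)
      = P.eval (Complex.exp ((t:ℂ) * Complex.I)) := by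
    rw [Polynomial.eval_eq_sum_range' (lt_of_le_of_lt hPdeg (Nat.lt_succ_self m))]
    apply Finset.sum_congr rfl
    intro j hj
    congr 1
    rw [← Complex.exp_nat_mul]
    congr 1
    ring
  rw [h1, h2]
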